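/- Let p be a prime, let E be the field with p² elements, and let F = E(X) be the field of rational functions in one variable X over E. Then the polynomial Z^{p²} − Z − X is irreducible in F[Z], and if α is a root of it in an algebraic closure of F, then F[α]/F is a Galois extension of degree p² whose Galois group is isomorphic to the additive group of E, i.e., to C_p × C_p. -/

import Mathlib

open Polynomial IntermediateField

noncomputable section


/-- swap of bivariate polynomial ring -/
def swapHom (E : Type*) [CommRing E] : (Polynomial E)[X] →+* (Polynomial E)[X] :=
  eval₂RingHom (eval₂RingHom (C.comp C) X) (C X)

lemma swapHom_invol (E : Type*) [CommRing E] (a : (Polynomial E)[X]) :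
    swapHom E (swapHom E a) = a := by
  have h : (swapHom E).comp (swapHom E) = RingHom.id _ := by
    unfold swapHom
    ext <;> simp
  exact congr($h a)

def swapEquiv (E : Type*) [CommRing E] : (Polynomial E)[X] ≃+* (Polynomial E)[X] :=
  RingEquiv.ofRingHom (swapHom E) (swapHom E)
    (RingHom.ext (swapHom_invol E)) (RingHom.ext (swapHom_invol E))

lemma monic_aux {R : Type*} [CommRing R] [Nontrivial R] (n : ℕ) (hn : 1 < n) (a : R) :
    ((X : R[X]) ^ n - X - C a).Monic := by
  rw [sub_sub]
  apply monic_X_pow_sub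
  calc degree (X + C a) ≤ 1 := by
        apply (degree_add_le _ _).trans
        simp [degree_C_le.trans]
      _ < n := by exact_mod_cast hn

lemma irred_int (E : Type*) [Field E] (n : ℕ) (hn : 1 < n) :
    Irreducible ((X : (Polynomial E)[X]) ^ n - X - C X) := by
  rw [← MulEquiv.irreducible_iff (swapEquiv E).toMulEquiv]
  have : swapEquiv E ((X : (Polynomial E)[X]) ^ n - X - C X)
      = -(X - C ((X : Polynomial E) ^ n - X)) := by
    rw [swapEquiv, RingEquiv.ofRingHom_apply]
    unfold swapHom
    simp [map_sub, map_pow]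
  rw [show ((swapEquiv E).toMulEquiv ((X : (Polynomial E)[X]) ^ n - X - C X)) = -(X - C ((X : Polynomial E) ^ n - X)) from this]
  exact ((prime_X_sub_C _).neg).irreducible

lemma irred_rat (E : Type*) [Field E] (n : ℕ) (hn : 1 < n) :
    Irreducible ((X : (RatFunc E)[X]) ^ n - X - C RatFunc.X) := by
  have hm := monic_aux n hn (X : Polynomial E)
  have h := (hm.irreducible_iff_irreducible_map_fraction_map (K := RatFunc E)).mp
    (irred_int E n hn)
  convert h using 1
  simp [Polynomial.map_sub, Polynomial.map_pow, RatFunc.algebraMap_X]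



set_option synthInstance.maxHeartbeats 1000000
set_option maxHeartbeats 2000000

theorem artin_schreier_general (E : Type*) [Field E] [Fintype E] (F : Type*) [Field F]
    [Algebra E F] (pp n : ℕ) [Fact pp.Prime] [CharP E pp] (hn : n ≠ 0)
    (hcard : Fintype.card E = pp ^ n)
    (a : F) (q : F[X]) (hq : q = X ^ (pp ^ n) - X - C a) (hirr : Irreducible q)
    (α : AlgebraicClosure F) (hα : aeval α q = 0) :
    IsGalois F F⟮α⟯ ∧ Module.finrank F F⟮α⟯ = pp ^ n ∧
      Nonempty ((F⟮α⟯ ≃ₐ[F] F⟮α⟯) ≃* Multiplicative E) := by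
  have hpp : 1 < pp := (Fact.out : pp.Prime).one_lt
  have hppn : 1 < pp ^ n := Nat.one_lt_pow hn hpp
  have hmonic : q.Monic := by
    rw [hq, sub_sub]
    apply monic_X_pow_sub
    calc degree ((X : F[X]) + C a) ≤ 1 := by
          apply (degree_add_le _ _).trans
          simp [degree_C_le.trans]
        _ < (pp ^ n : ℕ) := by exact_mod_cast hppn
  have hq0 : q ≠ 0 := hmonic.ne_zero
  have hdeg : q.natDegree = pp ^ n := by
    rw [hq, sub_sub]
    rw [natDegree_sub_eq_left_of_natDegree_lt, natDegree_X_pow]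
    rw [natDegree_X_pow]
    calc ((X : F[X]) + C a).natDegree ≤ 1 := by
          apply (natDegree_add_le _ _).trans
          simp
        _ < pp ^ n := hppn
  haveI : CharP F pp := charP_of_injective_algebraMap (algebraMap E F).injective pp
  haveI : CharP (AlgebraicClosure F) pp :=
    charP_of_injective_algebraMap (algebraMap F (AlgebraicClosure F)).injective pp
  have hint : IsIntegral F α := ⟨q, hmonic, by rwa [← aeval_def]⟩
  have hmin : minpoly F α = q := (minpoly.eq_of_irreducible_of_monic hirr hα hmonic).symm
  set j : E → AlgebraicClosure F :=
    fun c => algebraMap F (AlgebraicClosure F) (algebraMap E F c) with hj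
  have hjinj : Function.Injective j :=
    (algebraMap F (AlgebraicClosure F)).injective.comp (algebraMap E F).injective
  have hjadd : ∀ c d : E, j (c + d) = j c + j d := by intro c d; simp [hj, map_add]
  have hpowc : ∀ c : E, c ^ pp ^ n = c := by
    intro c; rw [← hcard]; exact FiniteField.pow_card c
  have haeval : ∀ x : AlgebraicClosure F,
      aeval x q = x ^ pp ^ n - x - algebraMap F (AlgebraicClosure F) a := by
    intro x; rw [hq]; simp
  have hroot : ∀ c : E, aeval (α + j c) q = 0 := by
    intro c
    have h1 : (α + j c) ^ pp ^ n = α ^ pp ^ n + j c := by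
      rw [add_pow_char_pow]
      congr 1
      simp only [hj, ← map_pow, hpowc]
    rw [haeval, h1]
    have h2 := haeval α
    rw [hα] at h2
    linear_combination -h2
  classical
  -- the set of roots in the algebraic closure
  have haddinj : Function.Injective (fun c : E => α + j c) := by
    intro c d h
    exact hjinj (by simpa using h)
  set t : Finset (AlgebraicClosure F) := Finset.univ.image (fun c => α + j c) with ht
  have htcard : t.card = pp ^ n := by
    rw [ht, Finset.card_image_of_injective _ haddinj, Finset.card_univ, hcard]
  set qm : (AlgebraicClosure F)[X] := q.map (algebraMap F (AlgebraicClosure F)) with hqm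
  have hqmne : qm ≠ 0 := (hmonic.map _).ne_zero
  have hqmdeg : qm.natDegree = pp ^ n := by rw [hqm, natDegree_map, hdeg]
  have hsubt : t ⊆ qm.roots.toFinset := by
    intro x hx
    rw [ht, Finset.mem_image] at hx
    obtain ⟨c, _, rfl⟩ := hx
    rw [Multiset.mem_toFinset, mem_roots hqmne]
    show qm.eval _ = 0
    rw [hqm, eval_map, ← aeval_def, hroot c]
  have hrootsfin : qm.roots.toFinset = t := by
    refine (Finset.eq_of_subset_of_card_le hsubt ?_).symm
    calc qm.roots.toFinset.card ≤ qm.roots.card := qm.roots.toFinset_card_le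
      _ ≤ qm.natDegree := qm.card_roots'
      _ = t.card := by rw [hqmdeg, htcard]
  have hrootSet : q.rootSet (AlgebraicClosure F) = ↑t := by
    rw [rootSet_def, aroots_def, ← hqm, hrootsfin]
  have hsplits : (q.map (algebraMap F (AlgebraicClosure F))).Splits :=
    IsAlgClosed.splits _
  have heq : adjoin F (q.rootSet (AlgebraicClosure F)) = F⟮α⟯ := by
    apply le_antisymm
    · rw [adjoin_le_iff]
      intro x hx
      rw [hrootSet] at hx
      rw [Finset.mem_coe, ht, Finset.mem_image] at hx
      obtain ⟨c, _, rfl⟩ := hx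
      exact add_mem (mem_adjoin_simple_self F α) (F⟮α⟯.algebraMap_mem _)
    · rw [adjoin_simple_le_iff]
      apply subset_adjoin
      rw [hrootSet, Finset.mem_coe, ht, Finset.mem_image]
      exact ⟨0, Finset.mem_univ _, by simp [hj]⟩
  haveI hsf : IsSplittingField F F⟮α⟯ q := heq ▸ adjoin_rootSet_isSplittingField hsplits
  have hsep : q.Separable := by
    have hder : q.derivative = -1 := by
      rw [hq]
      simp only [derivative_sub, derivative_X_pow, derivative_X, derivative_C, sub_zero]
      have : ((pp ^ n : ℕ) : F) = 0 := by
        rw [Nat.cast_pow, CharP.cast_eq_zero F pp, zero_pow hn]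
      rw [this]
      simp
    rw [Polynomial.Separable, hder]
    exact (isCoprime_one_right).neg_right
  haveI hgal : IsGalois F F⟮α⟯ := IsGalois.of_separable_splitting_field hsep
  haveI hfd : FiniteDimensional F F⟮α⟯ := adjoin.finiteDimensional hint
  have hfr : Module.finrank F F⟮α⟯ = pp ^ n := by
    rw [adjoin.finrank hint, hmin, hdeg]
  refine ⟨hgal, hfr, ?_⟩
  -- Galois group computation
  set gen := AdjoinSimple.gen F α with hgen
  have hgenmap : algebraMap F⟮α⟯ (AlgebraicClosure F) gen = α := AdjoinSimple.algebraMap_gen F α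
  have hgenroot : aeval gen q = 0 := by rw [← hmin]; exact aeval_gen_minpoly F α
  have hex : ∀ σ : F⟮α⟯ ≃ₐ[F] F⟮α⟯, ∃ c : E,
      algebraMap F⟮α⟯ (AlgebraicClosure F) (σ gen) = α + j c := by
    intro σ
    have h1 : aeval (σ gen) q = 0 := by
      have h := aeval_algHom_apply σ.toAlgHom gen q
      rw [show aeval (σ gen) q = _ from h, hgenroot, map_zero]
    have h2 : aeval (algebraMap F⟮α⟯ (AlgebraicClosure F) (σ gen)) q = 0 := by
      rw [aeval_algebraMap_apply, h1, map_zero]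
    have h3 : (algebraMap F⟮α⟯ (AlgebraicClosure F) (σ gen)) ∈ t := by
      rw [← hrootsfin, Multiset.mem_toFinset, mem_roots hqmne]
      show qm.eval _ = 0
      rw [hqm, eval_map, ← aeval_def]
      exact h2
    rw [ht, Finset.mem_image] at h3
    obtain ⟨c, _, hc⟩ := h3
    exact ⟨c, hc.symm⟩
  set cfun : (F⟮α⟯ ≃ₐ[F] F⟮α⟯) → E := fun σ => (hex σ).choose with hcfun
  have hspec : ∀ σ : F⟮α⟯ ≃ₐ[F] F⟮α⟯,
      algebraMap F⟮α⟯ (AlgebraicClosure F) (σ gen) = α + j (cfun σ) :=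
    fun σ => (hex σ).choose_spec
  set κ : E → F⟮α⟯ := fun c => algebraMap F F⟮α⟯ (algebraMap E F c) with hκ
  have hκj : ∀ c, algebraMap F⟮α⟯ (AlgebraicClosure F) (κ c) = j c := by
    intro c
    rw [hκ, hj]
    exact (IsScalarTower.algebraMap_apply F F⟮α⟯ (AlgebraicClosure F) _).symm
  have hgeneq : ∀ σ : F⟮α⟯ ≃ₐ[F] F⟮α⟯, σ gen = gen + κ (cfun σ) := by
    intro σ
    apply (algebraMap F⟮α⟯ (AlgebraicClosure F)).injective
    rw [map_add, hκj, hspec σ, hgenmap]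
  have hhom : ∀ σ τ : F⟮α⟯ ≃ₐ[F] F⟮α⟯, cfun (σ * τ) = cfun σ + cfun τ := by
    intro σ τ
    apply hjinj
    have h1 : (σ * τ) gen = σ gen + κ (cfun τ) := by
      show σ (τ gen) = _
      rw [hgeneq τ, map_add, hκ]
      simp
    have h2 := hspec (σ * τ)
    rw [h1, map_add, hκj, hspec σ] at h2
    rw [hjadd]
    linear_combination -h2
  have hinj : ∀ σ τ : F⟮α⟯ ≃ₐ[F] F⟮α⟯, cfun σ = cfun τ → σ = τ := by
    intro σ τ h
    have h1 : σ gen = τ gen := by rw [hgeneq σ, hgeneq τ, h]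
    have h2 : σ.toAlgHom = τ.toAlgHom := by
      apply (adjoin.powerBasis hint).algHom_ext
      rw [adjoin.powerBasis_gen]
      exact h1
    exact AlgEquiv.coe_algHom_injective h2
  refine ⟨MulEquiv.ofBijective
    (MonoidHom.mk' (fun σ => Multiplicative.ofAdd (cfun σ)) (fun σ τ => congrArg Multiplicative.ofAdd (hhom σ τ)))
    ((Fintype.bijective_iff_injective_and_card _).mpr ⟨?_, ?_⟩)⟩
  · intro σ τ h
    exact hinj σ τ (by simpa using h)
  · rw [← Nat.card_eq_fintype_card, IsGalois.card_aut_eq_finrank F F⟮α⟯, hfr, Fintype.card_multiplicative, hcard]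


set_option synthInstance.maxHeartbeats 1000000 in
/-- **Example (pedo), setup.** Let `p` be a prime, `E = 𝔽_{p²}`, and `F = E(X)`.
Then `Z^{p²} - Z - X` is irreducible in `F[Z]`, and if `α` is a root of it in an
algebraic closure of `F`, then `F[α]/F` is a Galois extension of degree `p²` whose
Galois group is isomorphic to the additive group of `E`, i.e. to `C_p × C_p`. -/
theorem stmt2 (p : ℕ) [Fact p.Prime]
    (q : Polynomial (RatFunc (GaloisField p 2)))
    (hq : q = Polynomial.X ^ (p ^ 2) - Polynomial.X - Polynomial.C RatFunc.X) :
    Irreducible q ∧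
      ∀ α : AlgebraicClosure (RatFunc (GaloisField p 2)),
        Polynomial.aeval α q = 0 →
          IsGalois (RatFunc (GaloisField p 2))
            (IntermediateField.adjoin (RatFunc (GaloisField p 2)) {α}) ∧
          Module.finrank (RatFunc (GaloisField p 2))
            (IntermediateField.adjoin (RatFunc (GaloisField p 2)) {α}) = p ^ 2 ∧
          Nonempty ((IntermediateField.adjoin (RatFunc (GaloisField p 2)) {α} ≃ₐ[RatFunc (GaloisField p 2)]
              IntermediateField.adjoin (RatFunc (GaloisField p 2)) {α}) ≃*
            Multiplicative (GaloisField p 2)) ∧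
          Nonempty ((IntermediateField.adjoin (RatFunc (GaloisField p 2)) {α} ≃ₐ[RatFunc (GaloisField p 2)]
              IntermediateField.adjoin (RatFunc (GaloisField p 2)) {α}) ≃*
            Multiplicative (ZMod p × ZMod p)) := by
  haveI : Fintype (GaloisField p 2) := Fintype.ofFinite _
  have hp1 : (1:ℕ) < p ^ 2 := Nat.one_lt_pow (by norm_num) (Fact.out : p.Prime).one_lt
  have hcard : Fintype.card (GaloisField p 2) = p ^ 2 := by
    rw [← Nat.card_eq_fintype_card]
    exact GaloisField.card p 2 (by norm_num)
  have hirr : Irreducible q := by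
    rw [hq]
    exact irred_rat (GaloisField p 2) (p ^ 2) hp1
  refine ⟨hirr, fun α hα => ?_⟩
  obtain ⟨hgal, hfr, ⟨e⟩⟩ := artin_schreier_general (GaloisField p 2)
    (RatFunc (GaloisField p 2)) p 2 (by norm_num) hcard RatFunc.X q hq hirr α hα
  refine ⟨hgal, hfr, ⟨e⟩, ?_⟩
  obtain ⟨l⟩ := FiniteDimensional.nonempty_linearEquiv_of_finrank_eq
    (R := ZMod p) (M := GaloisField p 2) (M' := ZMod p × ZMod p)
    (by rw [GaloisField.finrank p (by norm_num), Module.finrank_prod, Module.finrank_self])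
  exact ⟨e.trans (AddEquiv.toMultiplicative l.toAddEquiv)⟩
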